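/- (Spectral core of Theorem 2.8, the variance lower bound.) Let w : ℕ → ℝ satisfy w n ≥ 0 for all n, suppose S := ∑_{n=0}^∞ n! · w n < ∞, and suppose that the series ∑_{n=0}^∞ n · n! · w n converges with ∑_{n=0}^∞ n · n! · w n ≤ α · S for some α > 0. Then ∑_{n=0}^∞ (n! / (n+1)) · w n ≥ S / (α + 1). -/

import Mathlib

open scoped BigOperators

/-- spectral core of Theorem 2.8, the variance lower bound:
if `w ≥ 0`, `S = ∑ n!·w n < ∞` and `∑ n·n!·w n` converges with
`∑ n·n!·w n ≤ α·S` for some `α > 0`, then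
`∑ (n!/(n+1))·w n ≥ S/(α+1)`. -/
theorem stmt_6 (w : ℕ → ℝ) (hw : ∀ n, 0 ≤ w n)
    (hS : Summable fun n : ℕ => (Nat.factorial n : ℝ) * w n)
    (α : ℝ) (hα : 0 < α)
    (hsum : Summable fun n : ℕ => (n : ℝ) * (Nat.factorial n : ℝ) * w n)
    (hle : (∑' n : ℕ, (n : ℝ) * (Nat.factorial n : ℝ) * w n) ≤
      α * ∑' n : ℕ, (Nat.factorial n : ℝ) * w n) :
    (∑' n : ℕ, (Nat.factorial n : ℝ) / ((n : ℝ) + 1) * w n) ≥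
      (∑' n : ℕ, (Nat.factorial n : ℝ) * w n) / (α + 1) := by
  set a : ℝ := α + 1 with ha
  have ha0 : 0 < a := by positivity
  set S : ℝ := ∑' n : ℕ, (Nat.factorial n : ℝ) * w n with hSdef
  set T : ℝ := ∑' n : ℕ, (n : ℝ) * (Nat.factorial n : ℝ) * w n with hTdef
  -- summability of the target series
  have hf : Summable fun n : ℕ => (Nat.factorial n : ℝ) / ((n : ℝ) + 1) * w n := by
    apply Summable.of_nonneg_of_le (fun n => mul_nonneg (by positivity) (hw n)) _ hS
    intro n
    have h1 : (Nat.factorial n : ℝ) / ((n : ℝ) + 1) ≤ (Nat.factorial n : ℝ) := by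
      apply div_le_self (by positivity)
      have : (0:ℝ) ≤ (n : ℝ) := Nat.cast_nonneg n
      linarith
    exact mul_le_mul_of_nonneg_right h1 (hw n)
  -- the linear minorant
  have hg : Summable fun n : ℕ =>
      2 / a * ((Nat.factorial n : ℝ) * w n)
        - 1 / a ^ 2 * ((n : ℝ) * (Nat.factorial n : ℝ) * w n + (Nat.factorial n : ℝ) * w n) :=
    ((hS.mul_left _).sub (((hsum.add hS).mul_left _)))
  have hterm : ∀ n : ℕ,
      2 / a * ((Nat.factorial n : ℝ) * w n)
        - 1 / a ^ 2 * ((n : ℝ) * (Nat.factorial n : ℝ) * w n + (Nat.factorial n : ℝ) * w n)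
      ≤ (Nat.factorial n : ℝ) / ((n : ℝ) + 1) * w n := by
    intro n
    have hn1 : (0:ℝ) < (n : ℝ) + 1 := by positivity
    have hfw : (0:ℝ) ≤ (Nat.factorial n : ℝ) * w n := by
      have := hw n; positivity
    -- tangent line inequality: 2/a - (n+1)/a^2 ≤ 1/(n+1)
    have key : 2 / a - ((n : ℝ) + 1) / a ^ 2 ≤ 1 / ((n : ℝ) + 1) := by
      rw [div_sub_div _ _ (ne_of_gt ha0) (by positivity), div_le_div_iff₀ (by positivity) hn1]
      nlinarith [sq_nonneg ((n : ℝ) + 1 - a), ha0, hn1]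
    calc 2 / a * ((Nat.factorial n : ℝ) * w n)
          - 1 / a ^ 2 * ((n : ℝ) * (Nat.factorial n : ℝ) * w n + (Nat.factorial n : ℝ) * w n)
        = (2 / a - ((n : ℝ) + 1) / a ^ 2) * ((Nat.factorial n : ℝ) * w n) := by ring
      _ ≤ 1 / ((n : ℝ) + 1) * ((Nat.factorial n : ℝ) * w n) :=
          mul_le_mul_of_nonneg_right key hfw
      _ = (Nat.factorial n : ℝ) / ((n : ℝ) + 1) * w n := by ring
  have hsumle := Summable.tsum_le_tsum hterm hg hf
  have hgsum : (∑' n : ℕ, (2 / a * ((Nat.factorial n : ℝ) * w n)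
        - 1 / a ^ 2 * ((n : ℝ) * (Nat.factorial n : ℝ) * w n + (Nat.factorial n : ℝ) * w n)))
      = 2 / a * S - 1 / a ^ 2 * (T + S) := by
    rw [Summable.tsum_sub (hS.mul_left _) ((hsum.add hS).mul_left _), tsum_mul_left, tsum_mul_left,
      Summable.tsum_add hsum hS]
  rw [hgsum] at hsumle
  have hTS : T ≤ α * S := hle
  have : S / a ≤ 2 / a * S - 1 / a ^ 2 * (T + S) := by
    have h2 : T + S ≤ a * S := by rw [ha]; linarith
    have : 1 / a ^ 2 * (T + S) ≤ 1 / a ^ 2 * (a * S) :=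
      mul_le_mul_of_nonneg_left h2 (by positivity)
    have heq : 1 / a ^ 2 * (a * S) = S / a := by field_simp
    rw [heq] at this
    have h3 : 2 / a * S - S / a = S / a := by ring
    linarith
  exact le_trans this hsumle
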